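/- If C is a compact convex subset of ℝ^n containing 0, then the end set of C equals the level set γ_C^{-1}(1) of the gauge function of C. -/

import Mathlib

open Set Metric Filter
open scoped RealInnerProductSpace Pointwise

/-- The end set of a compact convex set containing 0 is the level-one set of its gauge. -/
theorem end_set_eq_gauge_level_one {n : ℕ} (C : Set (EuclideanSpace ℝ (Fin n)))
    (hconv : Convex ℝ C) (hcomp : IsCompact C)
    (h0 : (0 : EuclideanSpace ℝ (Fin n)) ∈ C) :
    {x ∈ C | ∀ t : ℝ, 1 < t → t • x ∉ C} = {x | gauge C x = 1} := by
  have hstar : StarConvex ℝ 0 C := hconv.starConvex h0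
  ext x
  simp only [mem_setOf_eq, mem_sep_iff]
  constructor
  · rintro ⟨hxC, hend⟩
    have hle : gauge C x ≤ 1 := gauge_le_one_of_mem hxC
    rcases lt_or_eq_of_le hle with hlt | heq
    · exfalso
      have hne : ({ r : ℝ | 0 < r ∧ x ∈ r • C }).Nonempty :=
        ⟨1, one_pos, by simpa using hxC⟩
      have hbdd : BddBelow { r : ℝ | 0 < r ∧ x ∈ r • C } :=
        ⟨0, fun r hr => hr.1.le⟩
      obtain ⟨r, ⟨hr0, hrC⟩, hr1⟩ := exists_lt_of_csInf_lt hne hlt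
      obtain ⟨c, hc, hcx⟩ := hrC
      have ht : (1 : ℝ) < r⁻¹ := (one_lt_inv₀ hr0).2 hr1
      exact hend r⁻¹ ht (by rw [← hcx, smul_smul, inv_mul_cancel₀ hr0.ne', one_smul]; exact hc)
    · exact heq
  · intro hg
    have hmem : ∀ t : ℝ, 1 < t → t⁻¹ • x ∈ C := by
      intro t ht
      have hne : ({ r : ℝ | 0 < r ∧ x ∈ r • C }).Nonempty := by
        by_contra h
        rw [not_nonempty_iff_eq_empty] at h
        have : gauge C x = 0 := by rw [gauge]; rw [h]; exact Real.sInf_empty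
        rw [hg] at this; norm_num at this
      have : gauge C x < t := by rw [hg]; exact ht
      obtain ⟨r, ⟨hr0, hrC⟩, hrt⟩ := exists_lt_of_csInf_lt hne this
      obtain ⟨c, hc, hcx⟩ := hrC
      have : t⁻¹ • x = (r / t) • c := by
        rw [← hcx, smul_smul]; ring_nf
      rw [this]
      exact hstar.smul_mem hc (by positivity) (div_le_one_of_le₀ hrt.le (by positivity))
    constructor
    · have htend : Tendsto (fun k : ℕ => ((1 : ℝ) + 1 / (k + 1))⁻¹ • x) atTop (nhds x) := by
        have h1 : Tendsto (fun k : ℕ => ((1 : ℝ) + 1 / (k + 1))⁻¹) atTop (nhds 1) := by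
          have : Tendsto (fun k : ℕ => (1 : ℝ) + 1 / (k + 1)) atTop (nhds 1) := by
            simpa using tendsto_const_nhds.add (tendsto_one_div_add_atTop_nhds_zero_nat : Tendsto (fun n : ℕ => 1 / ((n : ℝ) + 1)) atTop (nhds 0))
          simpa using this.inv₀ (by norm_num)
        simpa using h1.smul_const x
      refine hcomp.isClosed.mem_of_tendsto htend (Eventually.of_forall fun k => ?_)
      exact hmem _ (lt_add_of_pos_right 1 (by positivity))
    · intro t ht htx
      have : gauge C (t • x) ≤ 1 := gauge_le_one_of_mem htx
      rw [gauge_smul_of_nonneg (by linarith : (0:ℝ) ≤ t), smul_eq_mul, hg, mul_one] at this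
      linarith
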